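/- (Robustness of the doubly robust functional under correct propensity models.) Fix a* ∈ {0,1} and suppose c := μ(A=a*, S=0) > 0 and that every w with μ(W=w) > 0 satisfies μ(W=w, A=1, S=1) > 0 and μ(W=w, A=0, S=1) > 0 (so the true propensities g₍1,1₎(w) and g₍0,1₎(w) are strictly positive). Let m*₁, m*₀ : 𝒲 → ℝ be arbitrary functions (possibly misspecified outcome-model limits). Then, with the TRUE propensities, E_μ[ 1{A=1,S=1}·g₍a*,0₎(W)/(c·g₍1,1₎(W))·(ΔY − m*₁(W)) − 1{A=0,S=1}·g₍a*,0₎(W)/(c·g₍0,1₎(W))·(ΔY − m*₀(W)) + (1{A=a*,S=0}/c)·(m*₁(W) − m*₀(W)) ] = ψ(a*). -/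

import Mathlib

open MeasureTheory ProbabilityTheory
open scoped Classical

noncomputable section

/-- Conditional expectation of `X` given the event `E`. -/
def cexp {Ω : Type*} [MeasurableSpace Ω] (μ : Measure Ω) (X : Ω → ℝ) (E : Set Ω) : ℝ :=
  ∫ ω, X ω ∂(μ[|E])

/-- The event `{W = w, A = a, S = s}`. -/
def evtWAS {Ω 𝒲 : Type*} (W : Ω → 𝒲) (A S : Ω → Bool) (w : 𝒲) (a s : Bool) : Set Ω :=
  {ω | W ω = w ∧ A ω = a ∧ S ω = s}

/-- The event `{A = a, S = s}`. -/
def evtAS {Ω : Type*} (A S : Ω → Bool) (a s : Bool) : Set Ω :=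
  {ω | A ω = a ∧ S ω = s}

/-- The outcome-difference regression `m_a(w) = E[Y₁ - Y₀ | W = w, A = a, S = 1]`. -/
def mfun {Ω 𝒲 : Type*} [MeasurableSpace Ω] (μ : Measure Ω) (W : Ω → 𝒲) (A S : Ω → Bool)
    (Y₀ Y₁ : Ω → ℝ) (a : Bool) (w : 𝒲) : ℝ :=
  cexp μ (fun ω => Y₁ ω - Y₀ ω) (evtWAS W A S w a true)

/-- The true propensity `g_{a,s}(w) = μ({A = a, S = s} | {W = w})`. -/
def gprop {Ω 𝒲 : Type*} [MeasurableSpace Ω] (μ : Measure Ω) (W : Ω → 𝒲) (A S : Ω → Bool)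
    (a s : Bool) (w : 𝒲) : ℝ :=
  ((μ[|{ω | W ω = w}]) {ω | A ω = a ∧ S ω = s}).toReal

/-- The target statistical parameter `ψ(a*) = E[m₁(W) − m₀(W) | A = a*, S = 0]`. -/
def psiParam {Ω 𝒲 : Type*} [MeasurableSpace Ω] (μ : Measure Ω) (W : Ω → 𝒲) (A S : Ω → Bool)
    (Y₀ Y₁ : Ω → ℝ) (astar : Bool) : ℝ :=
  cexp μ (fun ω => mfun μ W A S Y₀ Y₁ true (W ω) - mfun μ W A S Y₀ Y₁ false (W ω))
    (evtAS A S astar false)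

/-- `cexp` as a normalized set integral. -/
lemma cexp_eq {Ω : Type*} [MeasurableSpace Ω] (μ : Measure Ω) (X : Ω → ℝ) (E : Set Ω) :
    cexp μ X E = ((μ E).toReal)⁻¹ * ∫ ω in E, X ω ∂μ := by
  rw [cexp, ProbabilityTheory.cond, integral_smul_measure, ENNReal.toReal_inv]
  rfl

lemma gprop_eq {Ω 𝒲 : Type*} [MeasurableSpace Ω] [MeasurableSpace 𝒲]
    [MeasurableSingletonClass 𝒲] (μ : Measure Ω) (W : Ω → 𝒲) (A S : Ω → Bool)
    (hW : Measurable W) (a s : Bool) (w : 𝒲) :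
    gprop μ W A S a s w
      = ((μ {ω | W ω = w}).toReal)⁻¹ * (μ (evtWAS W A S w a s)).toReal := by
  have hm : MeasurableSet {ω | W ω = w} := hW (measurableSet_singleton w)
  rw [gprop, ProbabilityTheory.cond_apply hm μ,
    ENNReal.toReal_mul, ENNReal.toReal_inv]
  congr 2


/-- the doubly robust functional recovers `ψ(a*)` when the propensity
models are correct, for arbitrary (possibly misspecified) outcome-model limits. -/
theorem dr_functional_correct_propensity_models
    {Ω : Type*} [MeasurableSpace Ω] (μ : Measure Ω) [IsProbabilityMeasure μ]
    {𝒲 : Type*} [Fintype 𝒲] [MeasurableSpace 𝒲] [MeasurableSingletonClass 𝒲]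
    (S A : Ω → Bool) (W : Ω → 𝒲) (Y₀ Y₁ : Ω → ℝ)
    (hS : Measurable S) (hA : Measurable A) (hW : Measurable W)
    (hY₀ : Integrable Y₀ μ) (hY₁ : Integrable Y₁ μ)
    (astar : Bool)
    (hc : 0 < μ (evtAS A S astar false))
    (hpos : ∀ w : 𝒲, 0 < μ {ω | W ω = w} →
      0 < μ (evtWAS W A S w true true) ∧ 0 < μ (evtWAS W A S w false true))
    (mstar1 mstar0 : 𝒲 → ℝ) :
    ∫ ω,
      ((if A ω = true ∧ S ω = true then
          gprop μ W A S astar false (W ω)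
            / ((μ (evtAS A S astar false)).toReal * gprop μ W A S true true (W ω))
            * ((Y₁ ω - Y₀ ω) - mstar1 (W ω))
        else 0)
      - (if A ω = false ∧ S ω = true then
          gprop μ W A S astar false (W ω)
            / ((μ (evtAS A S astar false)).toReal * gprop μ W A S false true (W ω))
            * ((Y₁ ω - Y₀ ω) - mstar0 (W ω))
        else 0)
      + (if A ω = astar ∧ S ω = false then
          (1 / (μ (evtAS A S astar false)).toReal) * (mstar1 (W ω) - mstar0 (W ω))
        else 0)) ∂μ
    = psiParam μ W A S Y₀ Y₁ astar := by
  classical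
  -- abbreviations
  set c : ℝ := (μ (evtAS A S astar false)).toReal with hcdef
  have hcne : μ (evtAS A S astar false) ≠ ⊤ := measure_ne_top μ _
  have hcpos : 0 < c := ENNReal.toReal_pos hc.ne' hcne
  -- per-w coefficients
  set k1 : 𝒲 → ℝ := fun w => gprop μ W A S astar false w / (c * gprop μ W A S true true w)
    with hk1
  set k0 : 𝒲 → ℝ := fun w => gprop μ W A S astar false w / (c * gprop μ W A S false true w)
    with hk0
  -- measurability of events
  have hmeasW : ∀ w : 𝒲, MeasurableSet {ω | W ω = w} := fun w =>
    hW (measurableSet_singleton w)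
  have hmeasWAS : ∀ (w : 𝒲) (a s : Bool), MeasurableSet (evtWAS W A S w a s) := by
    intro w a s
    have : evtWAS W A S w a s
        = {ω | W ω = w} ∩ ({ω | A ω = a} ∩ {ω | S ω = s}) := by
      ext ω; simp [evtWAS, Set.mem_setOf_eq, and_assoc]
    rw [this]
    exact (hmeasW w).inter ((hA (measurableSet_singleton a)).inter
      (hS (measurableSet_singleton s)))
  have hmeasAS : ∀ a s : Bool, MeasurableSet (evtAS A S a s) := by
    intro a s
    have : evtAS A S a s = {ω | A ω = a} ∩ {ω | S ω = s} := rfl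
    rw [this]
    exact (hA (measurableSet_singleton a)).inter (hS (measurableSet_singleton s))
  -- integrability of ΔY
  have hΔY : Integrable (fun ω => Y₁ ω - Y₀ ω) μ := hY₁.sub hY₀
  -- the three per-w pieces, as indicator-style functions
  set f1 : 𝒲 → Ω → ℝ := fun w ω =>
    if W ω = w ∧ A ω = true ∧ S ω = true then k1 w * ((Y₁ ω - Y₀ ω) - mstar1 w) else 0
    with hf1
  set f0 : 𝒲 → Ω → ℝ := fun w ω =>
    if W ω = w ∧ A ω = false ∧ S ω = true then k0 w * ((Y₁ ω - Y₀ ω) - mstar0 w) else 0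
    with hf0
  set f2 : 𝒲 → Ω → ℝ := fun w ω =>
    if W ω = w ∧ A ω = astar ∧ S ω = false then (1 / c) * (mstar1 w - mstar0 w) else 0
    with hf2
  -- integrability of each piece
  have hint1 : ∀ w, Integrable (f1 w) μ := by
    intro w
    have : f1 w = (evtWAS W A S w true true).indicator
        (fun ω => k1 w * ((Y₁ ω - Y₀ ω) - mstar1 w)) := by
      funext ω
      simp [hf1, Set.indicator_apply, evtWAS, Set.mem_setOf_eq]
    rw [this]
    exact (((hΔY.sub (integrable_const _)).const_mul _).indicator (hmeasWAS w true true))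
  have hint0 : ∀ w, Integrable (f0 w) μ := by
    intro w
    have : f0 w = (evtWAS W A S w false true).indicator
        (fun ω => k0 w * ((Y₁ ω - Y₀ ω) - mstar0 w)) := by
      funext ω
      simp [hf0, Set.indicator_apply, evtWAS, Set.mem_setOf_eq]
    rw [this]
    exact (((hΔY.sub (integrable_const _)).const_mul _).indicator (hmeasWAS w false true))
  have hint2 : ∀ w, Integrable (f2 w) μ := by
    intro w
    have : f2 w = (evtWAS W A S w astar false).indicator
        (fun _ => (1 / c) * (mstar1 w - mstar0 w)) := by
      funext ω
      simp [hf2, Set.indicator_apply, evtWAS, Set.mem_setOf_eq]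
    rw [this]
    exact (integrable_const _).indicator (hmeasWAS w astar false)
  -- pointwise decomposition of the integrand
  have hpt : ∀ ω,
      ((if A ω = true ∧ S ω = true then
          gprop μ W A S astar false (W ω)
            / (c * gprop μ W A S true true (W ω)) * ((Y₁ ω - Y₀ ω) - mstar1 (W ω))
        else 0)
      - (if A ω = false ∧ S ω = true then
          gprop μ W A S astar false (W ω)
            / (c * gprop μ W A S false true (W ω)) * ((Y₁ ω - Y₀ ω) - mstar0 (W ω))
        else 0)
      + (if A ω = astar ∧ S ω = false then
          (1 / c) * (mstar1 (W ω) - mstar0 (W ω))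
        else 0))
      = ∑ w : 𝒲, (f1 w ω - f0 w ω + f2 w ω) := by
    intro ω
    rw [Finset.sum_eq_single (W ω)]
    · simp [hf1, hf0, hf2, hk1, hk0]
    · intro w _ hw
      have hw' : ¬ (W ω = w) := fun h => hw h.symm
      simp [hf1, hf0, hf2, hw']
    · intro h; exact absurd (Finset.mem_univ _) h
  -- rewrite the LHS integral
  rw [show (∫ ω,
      ((if A ω = true ∧ S ω = true then
          gprop μ W A S astar false (W ω)
            / ((μ (evtAS A S astar false)).toReal * gprop μ W A S true true (W ω))
            * ((Y₁ ω - Y₀ ω) - mstar1 (W ω))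
        else 0)
      - (if A ω = false ∧ S ω = true then
          gprop μ W A S astar false (W ω)
            / ((μ (evtAS A S astar false)).toReal * gprop μ W A S false true (W ω))
            * ((Y₁ ω - Y₀ ω) - mstar0 (W ω))
        else 0)
      + (if A ω = astar ∧ S ω = false then
          (1 / (μ (evtAS A S astar false)).toReal) * (mstar1 (W ω) - mstar0 (W ω))
        else 0)) ∂μ)
      = ∫ ω, (∑ w : 𝒲, (f1 w ω - f0 w ω + f2 w ω)) ∂μ from by
    exact integral_congr_ae (Filter.Eventually.of_forall (fun ω => hpt ω))]
  rw [integral_finset_sum (μ := μ) Finset.univ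
    (f := fun w ω => f1 w ω - f0 w ω + f2 w ω)
    (fun w _ => ((hint1 w).sub (hint0 w)).add (hint2 w))]
  -- compute each summand
  have hterm : ∀ w : 𝒲, (∫ ω, (f1 w ω - f0 w ω + f2 w ω) ∂μ)
      = c⁻¹ * (μ (evtWAS W A S w astar false)).toReal
        * (mfun μ W A S Y₀ Y₁ true w - mfun μ W A S Y₀ Y₁ false w) := by
    intro w
    have hi10 : Integrable (fun ω => f1 w ω - f0 w ω) μ := (hint1 w).sub (hint0 w)
    rw [integral_add hi10 (hint2 w), integral_sub (hint1 w) (hint0 w)]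
    -- compute ∫ f1 w
    have e1 : ∫ ω, f1 w ω ∂μ
        = k1 w * ((∫ ω in evtWAS W A S w true true, (Y₁ ω - Y₀ ω) ∂μ)
            - mstar1 w * (μ (evtWAS W A S w true true)).toReal) := by
      have : (fun ω => f1 w ω) = (evtWAS W A S w true true).indicator
          (fun ω => k1 w * ((Y₁ ω - Y₀ ω) - mstar1 w)) := by
        funext ω
        simp [hf1, Set.indicator_apply, evtWAS, Set.mem_setOf_eq]
      rw [this, integral_indicator (hmeasWAS w true true), integral_const_mul,
        integral_sub (hΔY.integrableOn) integrableOn_const,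
        setIntegral_const]
      rw [smul_eq_mul, measureReal_def]; ring
    have e0 : ∫ ω, f0 w ω ∂μ
        = k0 w * ((∫ ω in evtWAS W A S w false true, (Y₁ ω - Y₀ ω) ∂μ)
            - mstar0 w * (μ (evtWAS W A S w false true)).toReal) := by
      have : (fun ω => f0 w ω) = (evtWAS W A S w false true).indicator
          (fun ω => k0 w * ((Y₁ ω - Y₀ ω) - mstar0 w)) := by
        funext ω
        simp [hf0, Set.indicator_apply, evtWAS, Set.mem_setOf_eq]
      rw [this, integral_indicator (hmeasWAS w false true), integral_const_mul,
        integral_sub (hΔY.integrableOn) integrableOn_const,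
        setIntegral_const]
      rw [smul_eq_mul, measureReal_def]; ring
    have e2 : ∫ ω, f2 w ω ∂μ
        = (1 / c) * (mstar1 w - mstar0 w) * (μ (evtWAS W A S w astar false)).toReal := by
      have : (fun ω => f2 w ω) = (evtWAS W A S w astar false).indicator
          (fun _ => (1 / c) * (mstar1 w - mstar0 w)) := by
        funext ω
        simp [hf2, Set.indicator_apply, evtWAS, Set.mem_setOf_eq]
      rw [this, integral_indicator (hmeasWAS w astar false), setIntegral_const]
      rw [smul_eq_mul, measureReal_def]; ring
    rw [e1, e0, e2]
    by_cases hwpos : 0 < μ {ω | W ω = w}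
    · -- main case
      obtain ⟨h1, h0⟩ := hpos w hwpos
      have hwne : (μ {ω | W ω = w}).toReal ≠ 0 :=
        (ENNReal.toReal_pos hwpos.ne' (measure_ne_top μ _)).ne'
      have h1ne : (μ (evtWAS W A S w true true)).toReal ≠ 0 :=
        (ENNReal.toReal_pos h1.ne' (measure_ne_top μ _)).ne'
      have h0ne : (μ (evtWAS W A S w false true)).toReal ≠ 0 :=
        (ENNReal.toReal_pos h0.ne' (measure_ne_top μ _)).ne'
      -- k1 w value
      have hk1v : k1 w = (μ (evtWAS W A S w astar false)).toReal
          / (c * (μ (evtWAS W A S w true true)).toReal) := by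
        rw [hk1]
        simp only
        rw [gprop_eq μ W A S hW, gprop_eq μ W A S hW]
        field_simp
      have hk0v : k0 w = (μ (evtWAS W A S w astar false)).toReal
          / (c * (μ (evtWAS W A S w false true)).toReal) := by
        rw [hk0]
        simp only
        rw [gprop_eq μ W A S hW, gprop_eq μ W A S hW]
        field_simp
      have hm1 : mfun μ W A S Y₀ Y₁ true w
          = ((μ (evtWAS W A S w true true)).toReal)⁻¹
            * ∫ ω in evtWAS W A S w true true, (Y₁ ω - Y₀ ω) ∂μ := cexp_eq ..
      have hm0 : mfun μ W A S Y₀ Y₁ false w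
          = ((μ (evtWAS W A S w false true)).toReal)⁻¹
            * ∫ ω in evtWAS W A S w false true, (Y₁ ω - Y₀ ω) ∂μ := cexp_eq ..
      rw [hk1v, hk0v, hm1, hm0]
      field_simp
      ring
    · -- null case: everything vanishes
      have hw0 : μ {ω | W ω = w} = 0 := by
        by_contra h
        exact hwpos (lt_of_le_of_ne zero_le (Ne.symm h))
      have hsub : ∀ a s : Bool, μ (evtWAS W A S w a s) = 0 := by
        intro a s
        refine measure_mono_null ?_ hw0
        intro ω hω; exact hω.1
      have hI1 : ∫ ω in evtWAS W A S w true true, (Y₁ ω - Y₀ ω) ∂μ = 0 := by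
        rw [Measure.restrict_eq_zero.2 (hsub true true), integral_zero_measure]
      have hI0 : ∫ ω in evtWAS W A S w false true, (Y₁ ω - Y₀ ω) ∂μ = 0 := by
        rw [Measure.restrict_eq_zero.2 (hsub false true), integral_zero_measure]
      rw [hI1, hI0, hsub true true, hsub false true, hsub astar false]
      simp
  -- now rewrite RHS
  have hpsi : psiParam μ W A S Y₀ Y₁ astar
      = ∑ w : 𝒲, c⁻¹ * (μ (evtWAS W A S w astar false)).toReal
          * (mfun μ W A S Y₀ Y₁ true w - mfun μ W A S Y₀ Y₁ false w) := by
    rw [psiParam, cexp_eq]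
    have hg : (fun ω => mfun μ W A S Y₀ Y₁ true (W ω) - mfun μ W A S Y₀ Y₁ false (W ω))
        = fun ω => ∑ w : 𝒲, (if W ω = w then
            (mfun μ W A S Y₀ Y₁ true w - mfun μ W A S Y₀ Y₁ false w) else 0) := by
      funext ω
      rw [Finset.sum_eq_single (W ω)]
      · simp
      · intro w _ hw
        have hne : ¬ W ω = w := fun h => hw h.symm
        simp [hne]
      · intro h; exact absurd (Finset.mem_univ _) h
    rw [hg]
    rw [integral_finset_sum]
    · rw [Finset.mul_sum]
      refine Finset.sum_congr rfl (fun w _ => ?_)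
      have : (fun ω => if W ω = w then
            (mfun μ W A S Y₀ Y₁ true w - mfun μ W A S Y₀ Y₁ false w) else 0)
          = {ω | W ω = w}.indicator
            (fun _ => mfun μ W A S Y₀ Y₁ true w - mfun μ W A S Y₀ Y₁ false w) := by
        funext ω; simp [Set.indicator_apply, Set.mem_setOf_eq]
      rw [this, integral_indicator (hmeasW w), setIntegral_const,
        measureReal_restrict_apply (hmeasW w)]
      have hset : {ω | W ω = w} ∩ evtAS A S astar false = evtWAS W A S w astar false := by
        ext ω
        simp [evtAS, evtWAS, Set.mem_setOf_eq, and_assoc]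
      rw [hset, smul_eq_mul, measureReal_def]
      ring
    · intro w _
      have : (fun ω => if W ω = w then
            (mfun μ W A S Y₀ Y₁ true w - mfun μ W A S Y₀ Y₁ false w) else 0)
          = {ω | W ω = w}.indicator
            (fun _ => mfun μ W A S Y₀ Y₁ true w - mfun μ W A S Y₀ Y₁ false w) := by
        funext ω; simp [Set.indicator_apply, Set.mem_setOf_eq]
      rw [this]
      exact ((integrable_const _).indicator (hmeasW w)).integrableOn
  rw [hpsi]
  exact Finset.sum_congr rfl (fun w _ => hterm w)


end
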